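/- arXiv:1704.01083 — 3 statements merged into one kernel-verified Lean document; each statement's English description precedes it below -/
import Mathlib

section
/- Let f ∈ ℂ[X₀,…,X₅] be a homogeneous polynomial of degree 3 that is irreducible, and suppose its zero set is invariant under ι, i.e. for every x ∈ ℂ⁶ with f(x) = 0 one has f(ι(x)) = 0. Then f(-X₀,X₁,…,X₅) = f(X₀,X₁,…,X₅); equivalently, f = X₀²·ℓ + g for some homogeneous ℓ of degree 1 and g of degree 3 in the variables X₁,…,X₅ only. -/
open MvPolynomial

/-- The ℂ-algebra involution of ℂ[X₀,…,X₅] sending X₀ ↦ -X₀ and Xᵢ ↦ Xᵢ for i ≥ 1. -/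
noncomputable def sigmaInv : MvPolynomial (Fin 6) ℂ →ₐ[ℂ] MvPolynomial (Fin 6) ℂ :=
  aeval (fun i : Fin 6 => if i = 0 then -X 0 else X i)

/-- The linear involution ι of ℂ⁶ sending (x₀,x₁,…,x₅) to (-x₀,x₁,…,x₅). -/
def iotaInv (x : Fin 6 → ℂ) : Fin 6 → ℂ := fun i => if i = 0 then -x 0 else x i

lemma sigmaInv_monomial (m : Fin 6 →₀ ℕ) (c : ℂ) :
    sigmaInv (monomial m c) = C ((-1 : ℂ) ^ (m 0)) * monomial m c := by
  rw [sigmaInv, aeval_monomial]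
  have h1 : (m.prod fun i k => (if i = 0 then -X 0 else X i : MvPolynomial (Fin 6) ℂ) ^ k)
      = C ((-1 : ℂ) ^ (m 0)) * m.prod fun i k => (X i : MvPolynomial (Fin 6) ℂ) ^ k := by
    rw [Finsupp.prod, Finsupp.prod]
    have h2 : ∀ i ∈ m.support,
        ((if i = 0 then -X 0 else X i : MvPolynomial (Fin 6) ℂ) ^ m i)
        = (if i = (0 : Fin 6) then C ((-1 : ℂ) ^ (m 0)) else 1) * (X i) ^ m i := by
      intro i _
      by_cases h : i = 0
      · subst h
        rw [if_pos rfl, if_pos rfl, neg_pow, map_pow, map_neg, map_one]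
      · simp [h]
    rw [Finset.prod_congr rfl h2, Finset.prod_mul_distrib]
    congr 1
    rw [Finset.prod_ite_eq' m.support (0 : Fin 6) (fun _ => C ((-1 : ℂ) ^ (m 0)))]
    by_cases h : (0 : Fin 6) ∈ m.support
    · rw [if_pos h]
    · rw [if_neg h]
      rw [Finsupp.notMem_support_iff.mp h]
      simp
  rw [h1, monomial_eq]
  ring_nf
  rw [algebraMap_eq]
  ring

lemma coeff_sigmaInv (f : MvPolynomial (Fin 6) ℂ) (m : Fin 6 →₀ ℕ) :
    coeff m (sigmaInv f) = (-1 : ℂ) ^ (m 0) * coeff m f := by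
  conv_lhs => rw [← support_sum_monomial_coeff f]
  rw [map_sum, coeff_sum]
  have h : ∀ s ∈ f.support, coeff m (sigmaInv (monomial s (coeff s f)))
      = if s = m then (-1 : ℂ) ^ (s 0) * coeff s f else 0 := by
    intro s _
    rw [sigmaInv_monomial, coeff_C_mul, coeff_monomial]
    split <;> simp
  rw [Finset.sum_congr rfl h]
  have : ∀ s ∈ f.support, (if s = m then (-1 : ℂ) ^ (s 0) * coeff s f else 0)
      = if s = m then (-1 : ℂ) ^ (m 0) * coeff s f else 0 := by
    intro s _
    split
    · next h => subst h; rfl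
    · rfl
  rw [Finset.sum_congr rfl this, Finset.sum_ite_eq' f.support m]
  by_cases h : m ∈ f.support
  · rw [if_pos h]
  · rw [if_neg h, MvPolynomial.notMem_support_iff.mp h, mul_zero]

lemma eval_sigmaInv (x : Fin 6 → ℂ) (f : MvPolynomial (Fin 6) ℂ) :
    eval x (sigmaInv f) = eval (iotaInv x) f := by
  induction f using MvPolynomial.induction_on with
  | C a => simp [sigmaInv]
  | add p q hp hq => simp [map_add, hp, hq]
  | mul_X p i hp =>
      rw [map_mul, eval_mul, eval_mul, hp]
      have hXi : sigmaInv (X i) = if i = 0 then -X 0 else X i := aeval_X _ i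
      rw [hXi]
      by_cases h : i = 0 <;> simp [iotaInv, h]

lemma sigmaInv_sigmaInv (f : MvPolynomial (Fin 6) ℂ) : sigmaInv (sigmaInv f) = f := by
  ext m
  rw [coeff_sigmaInv, coeff_sigmaInv, ← mul_assoc, ← pow_add]
  simp [Even.neg_one_pow ⟨m 0, rfl⟩]

lemma dvd_of_vanish {p q : MvPolynomial (Fin 6) ℂ} (hp : Prime p)
    (h : ∀ x, eval x p = 0 → eval x q = 0) : p ∣ q := by
  have hq : q ∈ vanishingIdeal ℂ (zeroLocus ℂ (Ideal.span {p})) := by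
    intro x hx
    exact h x (hx p (Ideal.subset_span rfl))
  rw [vanishingIdeal_zeroLocus_eq_radical, Ideal.IsPrime.radical] at hq
  · exact Ideal.mem_span_singleton.mp hq
  · exact (Ideal.span_singleton_prime hp.ne_zero).mpr hp

lemma hom_dvd {p q : MvPolynomial (Fin 6) ℂ} {n : ℕ} (hp : p.IsHomogeneous n)
    (hq : q.IsHomogeneous n) (hp0 : p ≠ 0) (h : p ∣ q) : ∃ c : ℂ, q = C c * p := by
  obtain ⟨t, rfl⟩ := h
  refine ⟨coeff 0 t, ?_⟩
  have h1 : homogeneousComponent n (p * t) = p * t := by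
    rw [homogeneousComponent_of_mem ((mem_homogeneousSubmodule _ _).mpr hq), if_pos rfl]
  have h2 : p * t = ∑ i ∈ Finset.range (t.totalDegree + 1), p * homogeneousComponent i t := by
    rw [← Finset.mul_sum, sum_homogeneousComponent]
  have h3 : homogeneousComponent n (p * t) = p * homogeneousComponent 0 t := by
    conv_lhs => rw [h2]
    rw [map_sum, Finset.sum_eq_single 0]
    · have h0 : (p * homogeneousComponent 0 t).IsHomogeneous n := by
        simpa using hp.mul (homogeneousComponent_isHomogeneous 0 t)
      rw [homogeneousComponent_of_mem ((mem_homogeneousSubmodule _ _).mpr h0), if_pos rfl]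
    · intro i _ hne
      have h0 : (p * homogeneousComponent i t).IsHomogeneous (n + i) :=
        hp.mul (homogeneousComponent_isHomogeneous i t)
      rw [homogeneousComponent_of_mem ((mem_homogeneousSubmodule _ _).mpr h0),
        if_neg (fun hn => hne (by omega))]
    · intro h0
      exact absurd (Finset.mem_range.mpr (Nat.succ_pos _)) h0
  have := h1.symm.trans h3
  rw [homogeneousComponent_zero] at this
  rw [this, mul_comm]

lemma x0_pow_dvd {f : MvPolynomial (Fin 6) ℂ} {k : ℕ} (h : ∀ m ∈ f.support, k ≤ m 0) :
    f = X 0 ^ k * (∑ m ∈ f.support, monomial (m - Finsupp.single 0 k) (coeff m f)) := by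
  rw [Finset.mul_sum]
  conv_lhs => rw [← support_sum_monomial_coeff f]
  apply Finset.sum_congr rfl
  intro m hm
  rw [X_pow_eq_monomial, monomial_mul, one_mul,
    add_tsub_cancel_of_le (Finsupp.single_le_iff.mpr (h m hm))]

lemma weight_one_single (i : Fin 6) (k : ℕ) :
    (Finsupp.weight (1 : Fin 6 → ℕ)) (Finsupp.single i k) = k := by
  simp [Finsupp.weight_apply, Finsupp.sum_single_index]

/-- An irreducible homogeneous cubic f whose zero set is invariant under ι satisfies
σ(f) = f; equivalently, f = X₀²·ℓ + g with ℓ, g homogeneous of degrees 1 and 3 in the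
variables X₁,…,X₅ only. -/
theorem invariant_zero_set_of_irreducible_cubic (f : MvPolynomial (Fin 6) ℂ)
    (hf : f.IsHomogeneous 3) (hirr : Irreducible f)
    (hinv : ∀ x : Fin 6 → ℂ, eval x f = 0 → eval (iotaInv x) f = 0) :
    sigmaInv f = f ∧
      ∃ ℓ g : MvPolynomial (Fin 6) ℂ,
        ℓ.IsHomogeneous 1 ∧ degreeOf 0 ℓ = 0 ∧
        g.IsHomogeneous 3 ∧ degreeOf 0 g = 0 ∧
        f = X 0 ^ 2 * ℓ + g := by
  classical
  have hfne : f ≠ 0 := hirr.ne_zero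
  have hprime : Prime f := UniqueFactorizationMonoid.irreducible_iff_prime.mp hirr
  have hdvd : f ∣ sigmaInv f := by
    apply dvd_of_vanish hprime
    intro x hx
    rw [eval_sigmaInv]
    exact hinv x hx
  have hσhom : (sigmaInv f).IsHomogeneous 3 := by
    intro d hd
    apply hf
    rw [coeff_sigmaInv] at hd
    exact fun h0 => hd (by rw [h0, mul_zero])
  obtain ⟨c, hc⟩ := hom_dvd hf hσhom hfne hdvd
  have hcc : c * c = 1 := by
    have h2 : f = C (c * c) * f := by
      conv_lhs => rw [← sigmaInv_sigmaInv f, hc]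
      rw [map_mul, hc]
      have hCc : sigmaInv (C c) = C c := by
        rw [show (C c : MvPolynomial (Fin 6) ℂ) = algebraMap ℂ _ c from rfl]
        exact AlgHom.commutes _ c
      rw [hCc, ← mul_assoc, ← C_mul]
    have h3 : C (c * c) * f = (1 : MvPolynomial (Fin 6) ℂ) * f := by
      rw [one_mul]; exact h2.symm
    have h4 := mul_right_cancel₀ hfne h3
    have := C_injective (Fin 6) ℂ (by rw [h4, C_1] : C (c*c) = C 1)
    simpa using this
  rcases mul_self_eq_one_iff.mp hcc with h1 | hm1
  · -- c = 1, σ f = f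
    subst h1
    rw [C_1, one_mul] at hc
    refine ⟨hc, ?_⟩
    have hsup : ∀ m ∈ f.support, m 0 = 0 ∨ m 0 = 2 := by
      intro m hm
      have hcoeff := mem_support_iff.mp hm
      have he : (-1 : ℂ) ^ (m 0) * coeff m f = coeff m f := by
        rw [← coeff_sigmaInv, hc]
      have heven : Even (m 0) := by
        by_contra hodd
        rw [Nat.not_even_iff_odd] at hodd
        rw [hodd.neg_one_pow, neg_one_mul] at he
        have h2 : (2 : ℂ) * coeff m f = 0 := by linear_combination - he
        exact hcoeff ((mul_eq_zero.mp h2).resolve_left two_ne_zero)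
      have hle : m 0 ≤ 3 := by
        have hw := hf hcoeff
        have h3 : Finsupp.degree m = 3 := by
          rw [Finsupp.degree_eq_weight_one]; exact hw
        have := Finsupp.le_degree (0 : Fin 6) m
        omega
      obtain ⟨k, hk⟩ := heven
      omega
    set S0 := f.support.filter (fun m => m 0 = 0) with hS0
    set S2 := f.support.filter (fun m => ¬ m 0 = 0) with hS2
    have hS2two : ∀ m ∈ S2, m 0 = 2 := by
      intro m hm
      obtain ⟨hms, hm0⟩ := Finset.mem_filter.mp hm
      exact (hsup m hms).resolve_left hm0
    refine ⟨∑ m ∈ S2, monomial (m - Finsupp.single 0 2) (coeff m f),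
      ∑ m ∈ S0, monomial m (coeff m f), ?_, ?_, ?_, ?_, ?_⟩
    · -- ℓ homogeneous of degree 1
      apply IsHomogeneous.sum
      intro m hm
      apply isHomogeneous_monomial
      have hms := (Finset.mem_filter.mp hm).1
      have hm2 : m 0 = 2 := hS2two m hm
      have hle : Finsupp.single (0 : Fin 6) 2 ≤ m := Finsupp.single_le_iff.mpr (by omega)
      have hadd : Finsupp.single (0 : Fin 6) 2 + (m - Finsupp.single 0 2) = m :=
        add_tsub_cancel_of_le hle
      have hdm := hf (mem_support_iff.mp hms)
      have h5 := congrArg (Finsupp.weight (1 : Fin 6 → ℕ)) hadd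
      rw [map_add, weight_one_single] at h5
      rw [Finsupp.degree_eq_weight_one, ← Pi.one_def]
      omega
    · -- degreeOf 0 ℓ = 0
      rw [← Nat.le_zero]
      apply degreeOf_le_iff.mpr
      intro m hm
      by_contra hcon
      apply mem_support_iff.mp hm
      rw [coeff_sum]
      apply Finset.sum_eq_zero
      intro m' hm'
      rw [coeff_monomial, if_neg]
      intro heq
      apply hcon
      have h0 : m 0 = m' 0 - 2 := by
        rw [← heq, Finsupp.tsub_apply, Finsupp.single_eq_same]
      rw [h0, hS2two m' hm']
    · -- g homogeneous of degree 3
      apply IsHomogeneous.sum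
      intro m hm
      apply isHomogeneous_monomial
      rw [Finsupp.degree_eq_weight_one]
      exact hf (mem_support_iff.mp (Finset.mem_filter.mp hm).1)
    · -- degreeOf 0 g = 0
      rw [← Nat.le_zero]
      apply degreeOf_le_iff.mpr
      intro m hm
      by_contra hcon
      apply mem_support_iff.mp hm
      rw [coeff_sum]
      apply Finset.sum_eq_zero
      intro m' hm'
      rw [coeff_monomial, if_neg]
      intro heq
      have := (Finset.mem_filter.mp hm').2
      rw [heq] at this
      omega
    · -- f = X 0 ^ 2 * ℓ + g
      have hmul : X 0 ^ 2 * (∑ m ∈ S2, monomial (m - Finsupp.single 0 2) (coeff m f))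
          = ∑ m ∈ S2, monomial m (coeff m f) := by
        rw [Finset.mul_sum]
        apply Finset.sum_congr rfl
        intro m hm
        rw [X_pow_eq_monomial, monomial_mul, one_mul,
          add_tsub_cancel_of_le (Finsupp.single_le_iff.mpr (by rw [hS2two m hm]))]
      rw [hmul, add_comm]
      exact ((Finset.sum_filter_add_sum_filter_not f.support (fun m => m 0 = 0)
        (fun m => monomial m (coeff m f))).trans (support_sum_monomial_coeff f)).symm
  · -- c = -1 : contradiction
    exfalso
    subst hm1
    have hodd : ∀ m ∈ f.support, 1 ≤ m 0 := by
      intro m hm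
      have hcoeff := mem_support_iff.mp hm
      by_contra h0
      have hm0 : m 0 = 0 := by omega
      have he : (-1 : ℂ) ^ (m 0) * coeff m f = - coeff m f := by
        rw [← coeff_sigmaInv, hc, coeff_C_mul]; ring
      rw [hm0, pow_zero, one_mul] at he
      have h2 : (2 : ℂ) * coeff m f = 0 := by linear_combination he
      exact hcoeff ((mul_eq_zero.mp h2).resolve_left two_ne_zero)
    have hXf := x0_pow_dvd hodd
    rw [pow_one] at hXf
    rcases hirr.isUnit_or_isUnit hXf with hu | hu
    · have h0 : IsUnit (eval (fun _ => (0 : ℂ)) (X (0 : Fin 6))) := hu.map (eval _)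
      rw [eval_X] at h0
      exact one_ne_zero (isUnit_zero_iff.mp h0).symm
    · set t := ∑ m ∈ f.support, monomial (m - Finsupp.single 0 1) (coeff m f) with ht
      obtain ⟨s, hs⟩ := isUnit_iff_exists_inv.mp hu
      have h1 : constantCoeff t * constantCoeff s = 1 := by
        rw [← map_mul, hs, map_one]
      have h2 : coeff (Finsupp.single (0 : Fin 6) 1) f = constantCoeff t := by
        rw [hXf]
        have h3 := coeff_X_mul (0 : Fin 6 →₀ ℕ) (0 : Fin 6) t
        rw [add_zero] at h3
        rw [h3, constantCoeff_eq]
      have h4 : coeff (Finsupp.single (0 : Fin 6) 1) f = 0 := by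
        apply hf.coeff_eq_zero
        rw [Finsupp.degree_eq_weight_one, ← Pi.one_def, weight_one_single]
        omega
      rw [h4] at h2
      rw [← h2, zero_mul] at h1
      exact zero_ne_one h1
end

section
/- Let v, w ∈ ℂ⁶ be nonzero vectors such that w is not a scalar multiple of v, w is not a scalar multiple of ι(v), and (w₁,…,w₅) ≠ (0,…,0). Then there exists a homogeneous polynomial f ∈ ℂ[X₀,…,X₅] of degree 3 with σ(f) = f (equivalently, f = X₀²ℓ(X₁,…,X₅) + g(X₁,…,X₅)) such that f(v) = 0 and f(w) ≠ 0. -/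
open MvPolynomial

lemma exists_quadric (v w : Fin 6 → ℂ)
    (hwv : ∀ c : ℂ, w ≠ c • v) (hwiv : ∀ c : ℂ, w ≠ c • iotaInv v)
    (hwtail : ∃ i : Fin 6, i ≠ 0 ∧ w i ≠ 0) :
    ∃ q : MvPolynomial (Fin 6) ℂ,
      q.IsHomogeneous 2 ∧ sigmaInv q = q ∧ eval v q = 0 ∧ eval w q ≠ 0 := by
  obtain ⟨i, hi0, hwi⟩ := hwtail
  by_cases hv' : ∀ j : Fin 6, j ≠ 0 → v j = 0
  · refine ⟨X i * X i, ?_, ?_, ?_, ?_⟩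
    · simpa using (isHomogeneous_X ℂ i).mul (isHomogeneous_X ℂ i)
    · simp [sigmaInv, hi0]
    · simp [hv' i hi0]
    · simp [hwi]
  · push_neg at hv'
    obtain ⟨j, hj0, hvj⟩ := hv'
    by_cases hwj : w j = 0
    · refine ⟨C ((v j)^2) * (X i * X i) - C ((v i)^2) * (X j * X j), ?_, ?_, ?_, ?_⟩
      · have h1 : (C ((v j)^2) * (X i * X i) : MvPolynomial (Fin 6) ℂ).IsHomogeneous 2 := by
          exact ((isHomogeneous_C _ ((v j)^2)).mul ((isHomogeneous_X ℂ i).mul (isHomogeneous_X ℂ i)))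
        have h2 : (C ((v i)^2) * (X j * X j) : MvPolynomial (Fin 6) ℂ).IsHomogeneous 2 := by
          exact ((isHomogeneous_C _ ((v i)^2)).mul ((isHomogeneous_X ℂ j).mul (isHomogeneous_X ℂ j)))
        simpa using h1.sub h2
      · simp [sigmaInv, hi0, hj0]
      · simp; ring
      · simp [hwj]
        exact ⟨hvj, hwi⟩
    · by_cases hk : ∃ k : Fin 6, k ≠ 0 ∧ v j * w k ≠ v k * w j
      · obtain ⟨k, hk0, hk⟩ := hk
        refine ⟨C (v j) * (X k * X j) - C (v k) * (X j * X j), ?_, ?_, ?_, ?_⟩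
        · have h1 : (C (v j) * (X k * X j) : MvPolynomial (Fin 6) ℂ).IsHomogeneous 2 := by
            simpa using ((isHomogeneous_C _ (v j)).mul ((isHomogeneous_X ℂ k).mul (isHomogeneous_X ℂ j)))
          have h2 : (C (v k) * (X j * X j) : MvPolynomial (Fin 6) ℂ).IsHomogeneous 2 := by
            simpa using ((isHomogeneous_C _ (v k)).mul ((isHomogeneous_X ℂ j).mul (isHomogeneous_X ℂ j)))
          simpa using h1.sub h2
        · simp [sigmaInv, hk0, hj0]
        · simp; ring
        · simp
          intro h
          exact hk (mul_right_cancel₀ hwj (by linear_combination h))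
      · push_neg at hk
        refine ⟨C ((v j)^2) * (X 0 * X 0) - C ((v 0)^2) * (X j * X j), ?_, ?_, ?_, ?_⟩
        · have h1 : (C ((v j)^2) * (X 0 * X 0) : MvPolynomial (Fin 6) ℂ).IsHomogeneous 2 := by
            exact ((isHomogeneous_C _ ((v j)^2)).mul ((isHomogeneous_X ℂ 0).mul (isHomogeneous_X ℂ 0)))
          have h2 : (C ((v 0)^2) * (X j * X j) : MvPolynomial (Fin 6) ℂ).IsHomogeneous 2 := by
            exact ((isHomogeneous_C _ ((v 0)^2)).mul ((isHomogeneous_X ℂ j).mul (isHomogeneous_X ℂ j)))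
          simpa using h1.sub h2
        · simp [sigmaInv, hj0]
        · simp; ring
        · simp
          intro h
          -- h : v j ^ 2 * (w 0 * w 0) = v 0 ^ 2 * (w j * w j)
          have hfac : (v j * w 0 - v 0 * w j) * (v j * w 0 + v 0 * w j) = 0 := by linear_combination h
          rcases mul_eq_zero.mp hfac with h1 | h1
          · apply hwv (w j / v j)
            funext k
            by_cases hk0 : k = 0
            · subst hk0
              simp only [Pi.smul_apply, smul_eq_mul]
              field_simp
              linear_combination h1
            · have := hk k hk0
              simp only [Pi.smul_apply, smul_eq_mul]
              field_simp
              linear_combination this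
          · apply hwiv (w j / v j)
            funext k
            by_cases hk0 : k = 0
            · subst hk0
              simp [iotaInv]
              field_simp
              linear_combination h1
            · have := hk k hk0
              simp [iotaInv, hk0]
              field_simp
              linear_combination this

/-- If v, w ∈ ℂ⁶ are nonzero, w is not a scalar multiple of v nor of ι(v), and
(w₁,…,w₅) ≠ 0, then there is a σ-invariant homogeneous cubic f with f(v) = 0 and
f(w) ≠ 0. -/
theorem separating_invariant_cubic (v w : Fin 6 → ℂ) (hv : v ≠ 0) (hw : w ≠ 0)
    (hwv : ∀ c : ℂ, w ≠ c • v) (hwiv : ∀ c : ℂ, w ≠ c • iotaInv v)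
    (hwtail : ∃ i : Fin 6, i ≠ 0 ∧ w i ≠ 0) :
    ∃ f : MvPolynomial (Fin 6) ℂ,
      f.IsHomogeneous 3 ∧ sigmaInv f = f ∧ eval v f = 0 ∧ eval w f ≠ 0 := by
  obtain ⟨q, hq2, hqs, hqv, hqw⟩ := exists_quadric v w hwv hwiv hwtail
  obtain ⟨i, hi0, hwi⟩ := hwtail
  refine ⟨q * X i, ?_, ?_, ?_, ?_⟩
  · exact hq2.mul (isHomogeneous_X ℂ i)
  · rw [map_mul, hqs]
    congr 1
    simp [sigmaInv, hi0]
  · simp [hqv]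
  · simp
    exact ⟨hqw, hwi⟩
end

section
/- Let v, w ∈ ℂ⁶ be nonzero vectors with (v₁,…,v₅) ≠ (0,…,0) and (w₁,…,w₅) ≠ (0,…,0), and such that w is not a scalar multiple of v and w is not a scalar multiple of ι(v). Let V⁺ denote the ℂ-vector space of homogeneous polynomials f ∈ ℂ[X₀,…,X₅] of degree 3 with σ(f) = f. Then the ℂ-linear evaluation map V⁺ → ℂ², f ↦ (f(v), f(w)), is surjective; i.e., the pair of points imposes two independent conditions on the invariant cubics. -/
open MvPolynomial

/-- If v, w ∈ ℂ⁶ are nonzero with nonzero tails (v₁,…,v₅) ≠ 0 ≠ (w₁,…,w₅), and w is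
not a scalar multiple of v nor of ι(v), then the pair (v, w) imposes two independent
conditions on the σ-invariant homogeneous cubics: the evaluation map f ↦ (f(v), f(w))
is surjective onto ℂ². -/
theorem two_independent_conditions (v w : Fin 6 → ℂ) (hv : v ≠ 0) (hw : w ≠ 0)
    (hvtail : ∃ i : Fin 6, i ≠ 0 ∧ v i ≠ 0) (hwtail : ∃ i : Fin 6, i ≠ 0 ∧ w i ≠ 0)
    (hwv : ∀ c : ℂ, w ≠ c • v) (hwiv : ∀ c : ℂ, w ≠ c • iotaInv v) :
    ∀ a b : ℂ, ∃ f : MvPolynomial (Fin 6) ℂ,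
      f.IsHomogeneous 3 ∧ sigmaInv f = f ∧ eval v f = a ∧ eval w f = b := by
  intro a b
  obtain ⟨j, hj, hvj⟩ := hvtail
  obtain ⟨k, hk, hwk⟩ := hwtail
  set c : ℂ := w j / v j with hc
  by_cases hprop : ∀ i, i ≠ 0 → w i = c * v i
  · -- tails proportional: use α X₀²Xⱼ + β Xⱼ³
    have hc0 : c ≠ 0 := by
      intro h; apply hwk; rw [hprop k hk, h, zero_mul]
    have h0v : w 0 ≠ c * v 0 := by
      intro h; apply hwv c; funext i
      by_cases hi : i = 0
      · simpa [hi] using h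
      · simpa using hprop i hi
    have h0iv : w 0 ≠ -(c * v 0) := by
      intro h; apply hwiv c; funext i
      by_cases hi : i = 0
      · simp [hi, iotaInv, h]
      · simp [iotaInv, hi]; exact hprop i hi
    have hdet : c ^ 2 * v 0 ^ 2 - w 0 ^ 2 ≠ 0 := by
      intro h
      have h2 : (c * v 0 - w 0) * (c * v 0 + w 0) = 0 := by linear_combination h
      rcases mul_eq_zero.mp h2 with h1 | h1
      · exact h0v (by linear_combination -h1)
      · exact h0iv (by linear_combination h1)
    set D : ℂ := c * v j ^ 4 * (c ^ 2 * v 0 ^ 2 - w 0 ^ 2) with hD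
    have hDne : D ≠ 0 := by
      simp [hD]; push_neg; exact ⟨⟨hc0, hvj⟩, hdet⟩
    set α : ℂ := (a * c ^ 3 * v j ^ 3 - b * v j ^ 3) / D with hα
    set β : ℂ := (b * v 0 ^ 2 * v j - a * w 0 ^ 2 * c * v j) / D with hβ
    refine ⟨C α * (X 0) ^ 2 * X j + C β * (X j) ^ 3, ?_, ?_, ?_, ?_⟩
    · have h1 : (C α * (X 0) ^ 2 * X j : MvPolynomial (Fin 6) ℂ).IsHomogeneous 3 :=
        ((isHomogeneous_C _ _).mul ((isHomogeneous_X _ _).pow 2)).mul (isHomogeneous_X _ _)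
      have h2 : (C β * (X j) ^ 3 : MvPolynomial (Fin 6) ℂ).IsHomogeneous 3 :=
        (isHomogeneous_C _ _).mul ((isHomogeneous_X _ _).pow 3)
      exact h1.add h2
    · simp [sigmaInv, hj]
    · simp only [eval_add, eval_mul, eval_pow, eval_C, eval_X, hα, hβ]
      field_simp
      rw [hD]; ring
    · have hwj : w j = c * v j := hprop j hj
      simp only [eval_add, eval_mul, eval_pow, eval_C, eval_X, hα, hβ, hwj]
      field_simp
      rw [hD]; ring
  · -- tails not proportional
    push_neg at hprop
    obtain ⟨i, hi, hwi⟩ := hprop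
    have hkey : v j * w i - v i * w j ≠ 0 := by
      intro h; apply hwi
      rw [hc, div_mul_eq_mul_div, eq_div_iff hvj]
      linear_combination h
    set L1 : MvPolynomial (Fin 6) ℂ := C (v j) * X i - C (v i) * X j with hL1
    set L2 : MvPolynomial (Fin 6) ℂ := C (w j) * X i - C (w i) * X j with hL2
    refine ⟨C (b / (v j * w i - v i * w j) ^ 3) * L1 ^ 3
          + C (a / (w j * v i - w i * v j) ^ 3) * L2 ^ 3, ?_, ?_, ?_, ?_⟩
    · have hL1h : L1.IsHomogeneous 1 :=
        (((isHomogeneous_C _ _).mul (isHomogeneous_X _ _)).sub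
          ((isHomogeneous_C _ _).mul (isHomogeneous_X _ _)))
      have hL2h : L2.IsHomogeneous 1 :=
        (((isHomogeneous_C _ _).mul (isHomogeneous_X _ _)).sub
          ((isHomogeneous_C _ _).mul (isHomogeneous_X _ _)))
      exact ((isHomogeneous_C _ _).mul (hL1h.pow 3)).add
        ((isHomogeneous_C _ _).mul (hL2h.pow 3))
    · simp [sigmaInv, hL1, hL2, hi, hj]
    · have hkey2 : w j * v i - w i * v j ≠ 0 := by
        intro h; apply hkey; linear_combination -h
      simp only [eval_add, eval_mul, eval_pow, eval_sub, eval_C, eval_X, hL1, hL2]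
      rw [show v j * v i - v i * v j = 0 by ring]
      field_simp
      have hkey3 : v i * w j - v j * w i ≠ 0 := by
        intro h; apply hkey; linear_combination -h
      rw [mul_div_assoc, div_self hkey3]; ring
    · simp only [eval_add, eval_mul, eval_pow, eval_sub, eval_C, eval_X, hL1, hL2]
      have hkey2 : w j * v i - w i * v j ≠ 0 := by
        intro h; apply hkey; linear_combination -h
      field_simp
      ring
end
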